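/- Let v ∈ S_d be a non-overlapping pattern, let a_n^{(1)}(v) := g_0^v(S_{n+d-1})/(n+d-1)!, and for n ≥ d set m := ⌊(n-1)/(d-1)⌋. Then a_n^{(1)}(v) - a_{n-1}^{(1)}(v) + (1/d!) a_{n-d}^{(1)}(v) + Σ_{j=1}^{m} (-1)^j L_j(v) a_{n-jd+j-d}^{(1)}(v) = 0, where L_j(v) := P(B_1^c ∩ B_d^c ∩ B_{2d-1}^c ∩ ··· ∩ B_{j(d-1)+1}^c) is the probability that a uniform random permutation of length (j+1)d - j has consecutive occurrences of v starting at positions 1, d, 2d-1, ..., j(d-1)+1. -/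

import Mathlib

open Finset MeasureTheory Polynomial

attribute [local instance] Classical.propDecidable

/-- `w` (restricted to positions `i, i+1, ..., i+d-1`) is a consecutive occurrence of the
pattern `v` (whose entries are `v 0, ..., v (d-1)`), i.e. the window is order-isomorphic
(respecting equalities) to the pattern. -/
def consecOcc {α : Type*} [LinearOrder α] (d : ℕ) (v : ℕ → ℕ) (w : ℕ → α) (i : ℕ) : Prop :=
  ∀ p q, p < d → q < d →
    ((w (i + p) < w (i + q) ↔ v p < v q) ∧ (w (i + p) = w (i + q) ↔ v p = v q))

/-- number of consecutive occurrences of the pattern `v` of length `d` in the word `w`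
of length `n`. -/
noncomputable def conCount {α : Type*} [LinearOrder α] (d n : ℕ) (v : ℕ → ℕ) (w : ℕ → α) : ℕ :=
  ((Finset.range n).filter (fun i => i + d ≤ n ∧ consecOcc d v w i)).card

/-- the word (ℕ-valued, 0-indexed) associated with a permutation of `Fin n`. -/
def permWord {n : ℕ} (σ : Equiv.Perm (Fin n)) : ℕ → ℕ :=
  fun j => if h : j < n then (σ ⟨j, h⟩ : ℕ) else 0

/-- `g_r^v(S_n)`: number of permutations of length `n` with exactly `r` consecutive
occurrences of the pattern `v` (of length `d`). -/
noncomputable def gPerm (d : ℕ) (v : ℕ → ℕ) (n r : ℕ) : ℕ :=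
  Nat.card {σ : Equiv.Perm (Fin n) // conCount d n v (permWord σ) = r}

/-- the word (ℕ-valued, 0-indexed) associated with a `k`-ary word of length `n`. -/
def wordFn {k n : ℕ} (w : Fin n → Fin k) : ℕ → ℕ :=
  fun j => if h : j < n then (w ⟨j, h⟩ : ℕ) else 0

/-- `g_r^v([k]^n)`: number of `k`-ary words of length `n` with exactly `r` consecutive
occurrences of the pattern `v` (of length `d`). -/
noncomputable def gWord (d k n r : ℕ) (v : ℕ → ℕ) : ℕ :=
  Nat.card {w : Fin n → Fin k // conCount d n v (wordFn w) = r}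

/-- `i` is in the overlap set `O_v` of the pattern `v` of length `d`:
`1 ≤ i < d` and the first `i` entries have the same relative order as the last `i` entries. -/
def inOverlap (d : ℕ) (v : ℕ → ℕ) (i : ℕ) : Prop :=
  1 ≤ i ∧ i < d ∧ ∀ p q, p < i → q < i → (v p < v q ↔ v (d - i + p) < v (d - i + q))

section Helpers


lemma eq_iff_of_lt_iff {α β : Type*} [LinearOrder α] [LinearOrder β] {a b : α} {c e : β}
    (h1 : a < b ↔ c < e) (h2 : b < a ↔ e < c) : (a = b ↔ c = e) := by
  constructor
  · intro h; subst h
    rcases lt_trichotomy c e with h' | h' | h'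
    · exact absurd (h1.2 h') (lt_irrefl _)
    · exact h'
    · exact absurd (h2.2 h') (lt_irrefl _)
  · intro h; subst h
    rcases lt_trichotomy a b with h' | h' | h'
    · exact absurd (h1.1 h') (lt_irrefl _)
    · exact h'
    · exact absurd (h2.1 h') (lt_irrefl _)

lemma consecOcc_congr {α β : Type*} [LinearOrder α] [LinearOrder β] {d : ℕ} {v : ℕ → ℕ}
    {w : ℕ → α} {w' : ℕ → β} {i i' : ℕ}
    (h : ∀ p q, p < d → q < d → (w (i + p) < w (i + q) ↔ w' (i' + p) < w' (i' + q))) :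
    consecOcc d v w i ↔ consecOcc d v w' i' := by
  constructor
  · intro H p q hp hq
    obtain ⟨h1, h2⟩ := H p q hp hq
    obtain ⟨h1', h2'⟩ := H q p hq hp
    refine ⟨((h p q hp hq).symm).trans h1, ?_⟩
    exact ((eq_iff_of_lt_iff ((h p q hp hq).symm) ((h q p hq hp).symm)).trans h2)
  · intro H p q hp hq
    obtain ⟨h1, h2⟩ := H p q hp hq
    refine ⟨(h p q hp hq).trans h1, ?_⟩
    exact (eq_iff_of_lt_iff (h p q hp hq) (h q p hq hp)).trans h2

lemma card_partition {α : Type*} [Fintype α] (p q : α → Prop) :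
    Nat.card {x // p x} = Nat.card {x // p x ∧ q x} + Nat.card {x // p x ∧ ¬ q x} := by
  classical
  simp only [Nat.card_eq_fintype_card, Fintype.card_subtype]
  rw [← Finset.card_filter_add_card_filter_not (s := Finset.univ.filter p) q]
  congr 1 <;> rw [Finset.filter_filter]

lemma card_iff_congr {α : Type*} {p q : α → Prop} (h : ∀ x, p x ↔ q x) :
    Nat.card {x // p x} = Nat.card {x // q x} :=
  Nat.card_congr (Equiv.subtypeEquivRight h)

lemma orderIsoOfFin_coe_congr {α : Type*} [LinearOrder α] {s t : Finset α} (h : s = t) {k : ℕ}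
    (hs : s.card = k) (ht : t.card = k) (i : Fin k) :
    (↑(s.orderIsoOfFin hs i) : α) = ↑(t.orderIsoOfFin ht i) := by subst h; rfl

end Helpers

section Split


variable (A B : ℕ)

/-- the set of values of the first `A` positions -/
noncomputable def sset (σ : Equiv.Perm (Fin (A + B))) : Finset (Fin (A + B)) :=
  Finset.univ.image (fun i : Fin A => σ (Fin.castAdd B i))

lemma natAdd_inj : Function.Injective (Fin.natAdd A : Fin B → Fin (A + B)) := by
  intro i j h
  have := congrArg Fin.val h
  simp only [Fin.coe_natAdd] at this
  exact Fin.ext (by omega)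

lemma sset_card (σ : Equiv.Perm (Fin (A + B))) : (sset A B σ).card = A := by
  have hinj : Function.Injective (fun i : Fin A => σ (Fin.castAdd B i)) :=
    fun i j h => Fin.castAdd_injective A B (σ.injective h)
  rw [sset, Finset.card_image_of_injective _ hinj, Finset.card_univ, Fintype.card_fin]

lemma sset_compl_card (σ : Equiv.Perm (Fin (A + B))) : (sset A B σ)ᶜ.card = B := by
  rw [Finset.card_compl, sset_card, Fintype.card_fin, Nat.add_sub_cancel_left]

lemma mem_sset (σ : Equiv.Perm (Fin (A + B))) (i : Fin A) :
    σ (Fin.castAdd B i) ∈ sset A B σ := by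
  simp [sset]

lemma mem_sset_compl (σ : Equiv.Perm (Fin (A + B))) (j : Fin B) :
    σ (Fin.natAdd A j) ∈ (sset A B σ)ᶜ := by
  simp only [Finset.mem_compl, sset, Finset.mem_image, Finset.mem_univ, true_and]
  rintro ⟨i, hi⟩
  have := σ.injective hi
  have h1 : (Fin.natAdd A j).val = (Fin.castAdd B i).val := by rw [this]
  simp only [Fin.coe_natAdd, Fin.coe_castAdd] at h1
  omega

noncomputable def tauFun (σ : Equiv.Perm (Fin (A + B))) : Fin A → Fin A :=
  fun i => ((sset A B σ).orderIsoOfFin (sset_card A B σ)).symm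
    ⟨σ (Fin.castAdd B i), mem_sset A B σ i⟩

noncomputable def rhoFun (σ : Equiv.Perm (Fin (A + B))) : Fin B → Fin B :=
  fun j => (((sset A B σ)ᶜ).orderIsoOfFin (sset_compl_card A B σ)).symm
    ⟨σ (Fin.natAdd A j), mem_sset_compl A B σ j⟩

lemma tauFun_injective (σ : Equiv.Perm (Fin (A + B))) : Function.Injective (tauFun A B σ) := by
  intro i j h
  have := ((sset A B σ).orderIsoOfFin (sset_card A B σ)).symm.injective h
  have := Subtype.ext_iff.1 this
  exact Fin.castAdd_injective A B (σ.injective this)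

lemma rhoFun_injective (σ : Equiv.Perm (Fin (A + B))) : Function.Injective (rhoFun A B σ) := by
  intro i j h
  have := (((sset A B σ)ᶜ).orderIsoOfFin (sset_compl_card A B σ)).symm.injective h
  have := Subtype.ext_iff.1 this
  exact natAdd_inj A B (σ.injective this)

noncomputable def tauPerm (σ : Equiv.Perm (Fin (A + B))) : Equiv.Perm (Fin A) :=
  Equiv.ofBijective _ ((Finite.injective_iff_bijective).1 (tauFun_injective A B σ))

noncomputable def rhoPerm (σ : Equiv.Perm (Fin (A + B))) : Equiv.Perm (Fin B) :=
  Equiv.ofBijective _ ((Finite.injective_iff_bijective).1 (rhoFun_injective A B σ))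

lemma tauPerm_spec (σ : Equiv.Perm (Fin (A + B))) (i : Fin A) :
    (↑((sset A B σ).orderIsoOfFin (sset_card A B σ) (tauPerm A B σ i)) : Fin (A + B))
      = σ (Fin.castAdd B i) := by
  show (↑((sset A B σ).orderIsoOfFin (sset_card A B σ) (tauFun A B σ i)) : Fin (A + B)) = _
  rw [tauFun, OrderIso.apply_symm_apply]

lemma rhoPerm_spec (σ : Equiv.Perm (Fin (A + B))) (j : Fin B) :
    (↑(((sset A B σ)ᶜ).orderIsoOfFin (sset_compl_card A B σ) (rhoPerm A B σ j)) : Fin (A + B))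
      = σ (Fin.natAdd A j) := by
  show (↑(((sset A B σ)ᶜ).orderIsoOfFin (sset_compl_card A B σ) (rhoFun A B σ j)) : Fin (A + B)) = _
  rw [rhoFun, OrderIso.apply_symm_apply]

lemma tau_lt_iff (σ : Equiv.Perm (Fin (A + B))) (i j : Fin A) :
    tauPerm A B σ i < tauPerm A B σ j ↔ σ (Fin.castAdd B i) < σ (Fin.castAdd B j) := by
  rw [← OrderIso.lt_iff_lt ((sset A B σ).orderIsoOfFin (sset_card A B σ)), Subtype.coe_lt_coe.symm,
    tauPerm_spec, tauPerm_spec]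

lemma rho_lt_iff (σ : Equiv.Perm (Fin (A + B))) (i j : Fin B) :
    rhoPerm A B σ i < rhoPerm A B σ j ↔ σ (Fin.natAdd A i) < σ (Fin.natAdd A j) := by
  rw [← OrderIso.lt_iff_lt (((sset A B σ)ᶜ).orderIsoOfFin (sset_compl_card A B σ)),
    Subtype.coe_lt_coe.symm, rhoPerm_spec, rhoPerm_spec]


variable (A B : ℕ)

noncomputable def gFun (S : Finset (Fin (A + B))) (hS : S.card = A) (hSc : Sᶜ.card = B)
    (τ : Equiv.Perm (Fin A)) (ρ : Equiv.Perm (Fin B)) : Fin (A + B) → Fin (A + B) :=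
  fun i => Fin.addCases (motive := fun _ => Fin (A + B))
    (fun i => ↑(S.orderIsoOfFin hS (τ i))) (fun j => ↑(Sᶜ.orderIsoOfFin hSc (ρ j))) i

lemma gFun_left (S : Finset (Fin (A + B))) (hS : S.card = A) (hSc : Sᶜ.card = B)
    (τ : Equiv.Perm (Fin A)) (ρ : Equiv.Perm (Fin B)) (i : Fin A) :
    gFun A B S hS hSc τ ρ (Fin.castAdd B i) = ↑(S.orderIsoOfFin hS (τ i)) := by
  simp [gFun]

lemma gFun_right (S : Finset (Fin (A + B))) (hS : S.card = A) (hSc : Sᶜ.card = B)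
    (τ : Equiv.Perm (Fin A)) (ρ : Equiv.Perm (Fin B)) (j : Fin B) :
    gFun A B S hS hSc τ ρ (Fin.natAdd A j) = ↑(Sᶜ.orderIsoOfFin hSc (ρ j)) := by
  simp [gFun]

lemma gFun_injective (S : Finset (Fin (A + B))) (hS : S.card = A) (hSc : Sᶜ.card = B)
    (τ : Equiv.Perm (Fin A)) (ρ : Equiv.Perm (Fin B)) :
    Function.Injective (gFun A B S hS hSc τ ρ) := by
  intro i j h
  induction i using Fin.addCases with
  | left i => induction j using Fin.addCases with
    | left j =>
      rw [gFun_left, gFun_left] at h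
      have := (S.orderIsoOfFin hS).injective (Subtype.ext h)
      rw [τ.injective this]
    | right j =>
      rw [gFun_left, gFun_right] at h
      exfalso
      have h1 := (S.orderIsoOfFin hS (τ i)).2
      have h2 := (Sᶜ.orderIsoOfFin hSc (ρ j)).2
      rw [h] at h1
      exact (Finset.mem_compl.1 h2) h1
  | right i => induction j using Fin.addCases with
    | left j =>
      rw [gFun_right, gFun_left] at h
      exfalso
      have h1 := (S.orderIsoOfFin hS (τ j)).2
      have h2 := (Sᶜ.orderIsoOfFin hSc (ρ i)).2
      rw [← h] at h1
      exact (Finset.mem_compl.1 h2) h1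
    | right j =>
      rw [gFun_right, gFun_right] at h
      have := (Sᶜ.orderIsoOfFin hSc).injective (Subtype.ext h)
      rw [ρ.injective this]

noncomputable def gPermDef (S : Finset (Fin (A + B))) (hS : S.card = A) (hSc : Sᶜ.card = B)
    (τ : Equiv.Perm (Fin A)) (ρ : Equiv.Perm (Fin B)) : Equiv.Perm (Fin (A + B)) :=
  Equiv.ofBijective _ ((Finite.injective_iff_bijective).1 (gFun_injective A B S hS hSc τ ρ))

lemma gPermDef_left (S : Finset (Fin (A + B))) (hS : S.card = A) (hSc : Sᶜ.card = B)
    (τ : Equiv.Perm (Fin A)) (ρ : Equiv.Perm (Fin B)) (i : Fin A) :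
    gPermDef A B S hS hSc τ ρ (Fin.castAdd B i) = ↑(S.orderIsoOfFin hS (τ i)) :=
  gFun_left A B S hS hSc τ ρ i

lemma gPermDef_right (S : Finset (Fin (A + B))) (hS : S.card = A) (hSc : Sᶜ.card = B)
    (τ : Equiv.Perm (Fin A)) (ρ : Equiv.Perm (Fin B)) (j : Fin B) :
    gPermDef A B S hS hSc τ ρ (Fin.natAdd A j) = ↑(Sᶜ.orderIsoOfFin hSc (ρ j)) :=
  gFun_right A B S hS hSc τ ρ j

lemma sset_gPermDef (S : Finset (Fin (A + B))) (hS : S.card = A) (hSc : Sᶜ.card = B)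
    (τ : Equiv.Perm (Fin A)) (ρ : Equiv.Perm (Fin B)) :
    sset A B (gPermDef A B S hS hSc τ ρ) = S := by
  apply Finset.eq_of_subset_of_card_le
  · intro x hx
    simp only [sset, Finset.mem_image, Finset.mem_univ, true_and] at hx
    obtain ⟨i, rfl⟩ := hx
    rw [gPermDef_left]
    exact (S.orderIsoOfFin hS (τ i)).2
  · rw [sset_card, hS]

lemma tauPerm_gPermDef (S : Finset (Fin (A + B))) (hS : S.card = A) (hSc : Sᶜ.card = B)
    (τ : Equiv.Perm (Fin A)) (ρ : Equiv.Perm (Fin B)) :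
    tauPerm A B (gPermDef A B S hS hSc τ ρ) = τ := by
  set σ := gPermDef A B S hS hSc τ ρ with hσ
  apply Equiv.ext
  intro i
  apply ((sset A B σ).orderIsoOfFin (sset_card A B σ)).injective
  apply Subtype.ext
  rw [tauPerm_spec]
  have h1 : σ (Fin.castAdd B i) = ↑(S.orderIsoOfFin hS (τ i)) := gPermDef_left A B S hS hSc τ ρ i
  rw [h1]
  exact (orderIsoOfFin_coe_congr (sset_gPermDef A B S hS hSc τ ρ) _ hS (τ i)).symm

lemma rhoPerm_gPermDef (S : Finset (Fin (A + B))) (hS : S.card = A) (hSc : Sᶜ.card = B)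
    (τ : Equiv.Perm (Fin A)) (ρ : Equiv.Perm (Fin B)) :
    rhoPerm A B (gPermDef A B S hS hSc τ ρ) = ρ := by
  set σ := gPermDef A B S hS hSc τ ρ with hσ
  apply Equiv.ext
  intro j
  apply (((sset A B σ)ᶜ).orderIsoOfFin (sset_compl_card A B σ)).injective
  apply Subtype.ext
  rw [rhoPerm_spec]
  have h1 : σ (Fin.natAdd A j) = ↑(Sᶜ.orderIsoOfFin hSc (ρ j)) := gPermDef_right A B S hS hSc τ ρ j
  rw [h1]
  have hcompl : (sset A B σ)ᶜ = Sᶜ := by rw [sset_gPermDef]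
  exact (orderIsoOfFin_coe_congr hcompl _ hSc (ρ j)).symm

lemma triple_injective (σ σ' : Equiv.Perm (Fin (A + B)))
    (h1 : sset A B σ = sset A B σ') (h2 : tauPerm A B σ = tauPerm A B σ')
    (h3 : rhoPerm A B σ = rhoPerm A B σ') : σ = σ' := by
  apply Equiv.ext
  intro i
  induction i using Fin.addCases with
  | left i =>
    rw [← tauPerm_spec A B σ i, ← tauPerm_spec A B σ' i, h2]
    exact orderIsoOfFin_coe_congr h1 _ _ _
  | right j =>
    rw [← rhoPerm_spec A B σ j, ← rhoPerm_spec A B σ' j, h3]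
    exact orderIsoOfFin_coe_congr (by rw [h1]) _ _ _

lemma permWord_lt_iff_left (σ : Equiv.Perm (Fin (A + B))) (p q : ℕ) (hp : p < A) (hq : q < A) :
    permWord σ p < permWord σ q
      ↔ permWord (tauPerm A B σ) p < permWord (tauPerm A B σ) q := by
  have hp' : p < A + B := lt_of_lt_of_le hp (Nat.le_add_right A B)
  have hq' : q < A + B := lt_of_lt_of_le hq (Nat.le_add_right A B)
  simp only [permWord, dif_pos hp', dif_pos hq', dif_pos hp, dif_pos hq]
  rw [show (⟨p, hp'⟩ : Fin (A + B)) = Fin.castAdd B ⟨p, hp⟩ from rfl,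
    show (⟨q, hq'⟩ : Fin (A + B)) = Fin.castAdd B ⟨q, hq⟩ from rfl,
    ← Fin.lt_def, ← Fin.lt_def, ← tau_lt_iff A B σ, Fin.lt_def]

lemma permWord_lt_iff_right (σ : Equiv.Perm (Fin (A + B))) (p q : ℕ) (hp : p < B) (hq : q < B) :
    permWord σ (A + p) < permWord σ (A + q)
      ↔ permWord (rhoPerm A B σ) p < permWord (rhoPerm A B σ) q := by
  have hp' : A + p < A + B := Nat.add_lt_add_left hp A
  have hq' : A + q < A + B := Nat.add_lt_add_left hq A
  simp only [permWord, dif_pos hp', dif_pos hq', dif_pos hp, dif_pos hq]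
  rw [show (⟨A + p, hp'⟩ : Fin (A + B)) = Fin.natAdd A ⟨p, hp⟩ from rfl,
    show (⟨A + q, hq'⟩ : Fin (A + B)) = Fin.natAdd A ⟨q, hq⟩ from rfl,
    ← Fin.lt_def, ← Fin.lt_def, ← rho_lt_iff A B σ, Fin.lt_def]

lemma perm_split_card (M : ℕ) (hM : A + B = M)
    (P : Equiv.Perm (Fin A) → Prop) (Q : Equiv.Perm (Fin B) → Prop)
    (R : Equiv.Perm (Fin M) → Prop)
    (hR : ∀ (σ : Equiv.Perm (Fin M)) (τ : Equiv.Perm (Fin A)) (ρ : Equiv.Perm (Fin B)),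
      (∀ p q, p < A → q < A →
        (permWord σ p < permWord σ q ↔ permWord τ p < permWord τ q)) →
      (∀ p q, p < B → q < B →
        (permWord σ (A + p) < permWord σ (A + q) ↔ permWord ρ p < permWord ρ q)) →
      (R σ ↔ P τ ∧ Q ρ)) :
    Nat.card {σ : Equiv.Perm (Fin M) // R σ} * (A.factorial * B.factorial)
      = Nat.card {τ : Equiv.Perm (Fin A) // P τ} * Nat.card {ρ : Equiv.Perm (Fin B) // Q ρ}
        * M.factorial := by
  subst hM
  have hRiff : ∀ σ : Equiv.Perm (Fin (A + B)),
      R σ ↔ P (tauPerm A B σ) ∧ Q (rhoPerm A B σ) := fun σ =>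
    hR σ _ _ (permWord_lt_iff_left A B σ) (permWord_lt_iff_right A B σ)
  have key : Nat.card {σ : Equiv.Perm (Fin (A + B)) // R σ}
      = (A + B).choose A *
        (Nat.card {τ : Equiv.Perm (Fin A) // P τ} * Nat.card {ρ : Equiv.Perm (Fin B) // Q ρ}) := by
    have e : {σ : Equiv.Perm (Fin (A + B)) // R σ} ≃
        ({S : Finset (Fin (A + B)) // S.card = A} ×
          ({τ : Equiv.Perm (Fin A) // P τ} × {ρ : Equiv.Perm (Fin B) // Q ρ})) := by
      refine Equiv.ofBijective
        (fun x => ⟨⟨sset A B x.1, sset_card A B x.1⟩,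
          ⟨⟨tauPerm A B x.1, ((hRiff x.1).1 x.2).1⟩,
           ⟨rhoPerm A B x.1, ((hRiff x.1).1 x.2).2⟩⟩⟩) ⟨?_, ?_⟩
      · intro x y h
        simp only [Prod.mk.injEq, Subtype.mk.injEq] at h
        exact Subtype.ext (triple_injective A B x.1 y.1 h.1 h.2.1 h.2.2)
      · rintro ⟨⟨S, hS⟩, ⟨τ, hτ⟩, ⟨ρ, hρ⟩⟩
        have hSc : Sᶜ.card = B := by
          rw [Finset.card_compl, hS, Fintype.card_fin, Nat.add_sub_cancel_left]
        refine ⟨⟨gPermDef A B S hS hSc τ ρ, ?_⟩, ?_⟩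
        · refine (hRiff _).2 ⟨?_, ?_⟩
          · rw [tauPerm_gPermDef]; exact hτ
          · rw [rhoPerm_gPermDef]; exact hρ
        · simp only [Prod.mk.injEq, Subtype.mk.injEq]
          exact ⟨sset_gPermDef A B S hS hSc τ ρ, tauPerm_gPermDef A B S hS hSc τ ρ,
            rhoPerm_gPermDef A B S hS hSc τ ρ⟩
    rw [Nat.card_congr e, Nat.card_prod, Nat.card_prod]
    congr 1
    rw [Nat.card_eq_fintype_card, Fintype.card_finset_len, Fintype.card_fin]
  have h2 : (A + B).choose A * A.factorial * B.factorial = (A + B).factorial := by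
    have := Nat.choose_mul_factorial_mul_factorial (Nat.le_add_right A B)
    rwa [Nat.add_sub_cancel_left] at this
  rw [key, ← h2]
  ring

end Split

section Domain

lemma occ_transfer_left {A dd : ℕ} {pv : ℕ → ℕ} {M : ℕ} (σ : Equiv.Perm (Fin M))
    (τ : Equiv.Perm (Fin A))
    (hbridge : ∀ p q, p < A → q < A →
      (permWord σ p < permWord σ q ↔ permWord τ p < permWord τ q))
    (i : ℕ) (hi : i + dd ≤ A) :
    consecOcc dd pv (permWord σ) i ↔ consecOcc dd pv (permWord τ) i :=
  consecOcc_congr (fun p q hp hq => hbridge (i + p) (i + q) (by omega) (by omega))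

lemma occ_transfer_right {A B dd : ℕ} {pv : ℕ → ℕ} {M : ℕ} (σ : Equiv.Perm (Fin M))
    (ρ : Equiv.Perm (Fin B))
    (hbridge : ∀ p q, p < B → q < B →
      (permWord σ (A + p) < permWord σ (A + q) ↔ permWord ρ p < permWord ρ q))
    (i : ℕ) (hi : i + dd ≤ B) :
    consecOcc dd pv (permWord σ) (A + i) ↔ consecOcc dd pv (permWord ρ) i :=
  consecOcc_congr (fun p q hp hq => by
    rw [Nat.add_assoc, Nat.add_assoc]
    exact hbridge (i + p) (i + q) (by omega) (by omega))

lemma no_close_occ {α : Type*} [LinearOrder α] {d : ℕ} {v : Equiv.Perm (Fin d)}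
    (hno : ∀ i, inOverlap d (permWord v) i ↔ i = 1) {w : ℕ → α} {i i' : ℕ}
    (h1 : i < i') (h2 : i' + 1 < i + d)
    (ho : consecOcc d (permWord v) w i) (ho' : consecOcc d (permWord v) w i') : False := by
  set l := i + d - i' with hl
  have hov : inOverlap d (permWord v) l := by
    refine ⟨by omega, by omega, ?_⟩
    intro p q hp hq
    have e1 := (ho' p q (by omega) (by omega)).1
    have e2 := (ho (d - l + p) (d - l + q) (by omega) (by omega)).1
    have hpos : i + (d - l + p) = i' + p := by omega
    have hpos' : i + (d - l + q) = i' + q := by omega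
    rw [hpos, hpos'] at e2
    exact e1.symm.trans e2
  have := (hno l).1 hov
  omega

lemma occ_self {d : ℕ} (v : Equiv.Perm (Fin d)) :
    consecOcc d (permWord v) (permWord v) 0 := by
  intro p q hp hq
  rw [Nat.zero_add, Nat.zero_add]
  exact ⟨Iff.rfl, Iff.rfl⟩

lemma occ_zero_unique {d : ℕ} (v σ : Equiv.Perm (Fin d))
    (h : consecOcc d (permWord v) (permWord σ) 0) : σ = v := by
  have hlt : ∀ p q : Fin d, σ p < σ q ↔ v p < v q := by
    intro p q
    have := (h p.val q.val p.isLt q.isLt).1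
    rw [Nat.zero_add, Nat.zero_add] at this
    simp only [permWord, dif_pos p.isLt, dif_pos q.isLt] at this
    rw [Fin.lt_def, Fin.lt_def]
    convert this using 3 <;> exact (Fin.eta _ _).symm
  let e : Fin d ≃o Fin d :=
    { toEquiv := v.symm.trans σ
      map_rel_iff' := by
        intro a b
        simp only [Equiv.trans_apply]
        rw [← not_lt, ← not_lt, hlt, Equiv.apply_symm_apply, Equiv.apply_symm_apply] }
  have he : ∀ x, e x = x := fun x => by
    rw [Subsingleton.elim e (OrderIso.refl (Fin d))]; rfl
  apply Equiv.ext
  intro i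
  have h3 : σ (v.symm (v i)) = v i := he (v i)
  rwa [Equiv.symm_apply_apply] at h3

lemma chain_card_zero (d : ℕ) (hd : 1 ≤ d) (v : Equiv.Perm (Fin d)) (M : ℕ) (hM : M = d) :
    Nat.card {σ : Equiv.Perm (Fin M) //
      ∀ s : ℕ, s ≤ 0 → consecOcc d (permWord v) (permWord σ) (s * (d - 1))} = 1 := by
  subst hM
  have h1 : ∀ σ : Equiv.Perm (Fin M),
      (∀ s : ℕ, s ≤ 0 → consecOcc M (permWord v) (permWord σ) (s * (M - 1)))
        ↔ consecOcc M (permWord v) (permWord σ) 0 := by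
    intro σ
    constructor
    · intro h
      have := h 0 le_rfl
      rwa [Nat.zero_mul] at this
    · intro h s hs
      interval_cases s
      rwa [Nat.zero_mul]
  rw [card_iff_congr h1, Nat.card_eq_one_iff_unique]
  constructor
  · constructor
    intro x y
    apply Subtype.ext
    rw [occ_zero_unique v x.1 x.2, occ_zero_unique v y.1 y.2]
  · exact ⟨⟨v, occ_self v⟩⟩

lemma conCount_zero_iff {α : Type*} [LinearOrder α] (d k : ℕ) (hd : 1 ≤ d) (pv : ℕ → ℕ)
    (w : ℕ → α) :
    conCount d (k + d - 1) pv w = 0 ↔ ∀ i, i < k → ¬ consecOcc d pv w i := by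
  rw [conCount, Finset.card_eq_zero, Finset.filter_eq_empty_iff]
  constructor
  · intro h i hik hocc
    exact h (Finset.mem_range.2 (by omega)) ⟨by omega, hocc⟩
  · intro h i hi hp
    rw [Finset.mem_range] at hi
    exact h i (by omega) hp.2

lemma perm_split_real (A B M : ℕ) (hM : A + B = M)
    (P : Equiv.Perm (Fin A) → Prop) (Q : Equiv.Perm (Fin B) → Prop)
    (R : Equiv.Perm (Fin M) → Prop)
    (hR : ∀ (σ : Equiv.Perm (Fin M)) (τ : Equiv.Perm (Fin A)) (ρ : Equiv.Perm (Fin B)),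
      (∀ p q, p < A → q < A →
        (permWord σ p < permWord σ q ↔ permWord τ p < permWord τ q)) →
      (∀ p q, p < B → q < B →
        (permWord σ (A + p) < permWord σ (A + q) ↔ permWord ρ p < permWord ρ q)) →
      (R σ ↔ P τ ∧ Q ρ)) :
    (Nat.card {σ : Equiv.Perm (Fin M) // R σ} : ℝ) / M.factorial
      = ((Nat.card {τ : Equiv.Perm (Fin A) // P τ} : ℝ) / A.factorial) *
        ((Nat.card {ρ : Equiv.Perm (Fin B) // Q ρ} : ℝ) / B.factorial) := by
  have h := perm_split_card A B M hM P Q R hR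
  have hc : (Nat.card {σ : Equiv.Perm (Fin M) // R σ} : ℝ) * (A.factorial * B.factorial)
      = (Nat.card {τ : Equiv.Perm (Fin A) // P τ} : ℝ) *
        (Nat.card {ρ : Equiv.Perm (Fin B) // Q ρ}) * M.factorial := by
    exact_mod_cast congrArg (fun t : ℕ => (t : ℝ)) h
  rw [div_mul_div_comm, div_eq_div_iff (by positivity) (by positivity)]
  linarith [hc]

lemma card_true_perm (A : ℕ) :
    Nat.card {τ : Equiv.Perm (Fin A) // True} = A.factorial := by
  rw [Nat.card_congr (Equiv.subtypeUnivEquiv (fun _ => trivial)), Nat.card_eq_fintype_card,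
    Fintype.card_perm, Fintype.card_fin]

end Domain

/-- Linear recursion for the avoidance probabilities `a_n^{(1)}(v)` of a non-overlapping
pattern `v ∈ S_d`, where `L_j(v)` is the probability that a uniform random permutation of
length `(j+1)d - j` has consecutive occurrences of `v` starting at (1-indexed) positions
`1, d, 2d-1, …, j(d-1)+1`, and `a` is extended by `1` to non-positive indices. -/
theorem nonoverlapping_linear_recursion (d : ℕ) (hd : 3 ≤ d) (v : Equiv.Perm (Fin d))
    (hno : ∀ i, inOverlap d (permWord v) i ↔ i = 1)
    (a : ℤ → ℝ)
    (ha : ∀ z : ℤ, a z = if z ≤ 0 then 1 else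
      (gPerm d (permWord v) (z.toNat + d - 1) 0 : ℝ) / (Nat.factorial (z.toNat + d - 1)))
    (L : ℕ → ℝ)
    (hL : ∀ j : ℕ, L j =
      (Nat.card {σ : Equiv.Perm (Fin ((j + 1) * d - j)) //
          ∀ s : ℕ, s ≤ j → consecOcc d (permWord v) (permWord σ) (s * (d - 1))} : ℝ) /
        (Nat.factorial ((j + 1) * d - j)))
    (n : ℕ) (hn : d ≤ n) :
    a n - a ((n : ℤ) - 1) + (1 / (Nat.factorial d : ℝ)) * a ((n : ℤ) - d) +
      ∑ j ∈ Finset.Icc 1 ((n - 1) / (d - 1)),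
        (-1 : ℝ) ^ j * L j * a ((n : ℤ) - j * d + j - d) = 0 := by
    classical
  have hd1 : 1 ≤ d := by omega
  have hn1 : 1 ≤ n := by omega
  obtain ⟨m, hm⟩ : ∃ m, (n - 1) / (d - 1) = m := ⟨_, rfl⟩
  rw [hm]
  -- basic arithmetic facts
  have hdm : ∀ j, j ≤ m → j * (d - 1) ≤ n - 1 := by
    intro j hj
    calc j * (d - 1) ≤ m * (d - 1) := Nat.mul_le_mul_right _ hj
    _ ≤ n - 1 := by rw [← hm]; exact Nat.div_mul_le_self _ _
  have hmlt : n - 1 < m * (d - 1) + (d - 1) := by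
    have h1 : (d - 1) * m + (n - 1) % (d - 1) = n - 1 := by
      rw [← hm]; exact Nat.div_add_mod _ _
    have h2 := Nat.mod_lt (n - 1) (show 0 < d - 1 by omega)
    have h3 : (d - 1) * m = m * (d - 1) := Nat.mul_comm _ _
    omega
  clear hm
  have hmul : ∀ j : ℕ, j * (d - 1) + j = j * d := by
    intro j
    have h : d - 1 + 1 = d := by omega
    calc j * (d - 1) + j = j * ((d - 1) + 1) := by ring
    _ = j * d := by rw [h]
  -- `a` in terms of counts of avoiding permutations
  have haK : ∀ k : ℕ, a (k : ℤ) =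
      (Nat.card {τ : Equiv.Perm (Fin (k + d - 1)) //
        ∀ i, i < k → ¬ consecOcc d (permWord v) (permWord τ) i} : ℝ) /
        (k + d - 1).factorial := by
    intro k
    rcases Nat.eq_zero_or_pos k with rfl | hk
    · have hcard : Nat.card {τ : Equiv.Perm (Fin (0 + d - 1)) //
          ∀ i, i < 0 → ¬ consecOcc d (permWord v) (permWord τ) i} = (0 + d - 1).factorial := by
        rw [card_iff_congr (q := fun _ => True)
          (fun τ => ⟨fun _ => trivial, fun _ i hi => absurd hi (Nat.not_lt_zero i)⟩),
          card_true_perm]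
      rw [Nat.cast_zero, ha 0, if_pos le_rfl, hcard, div_self]
      positivity
    · rw [ha (k : ℤ), if_neg (by exact_mod_cast Nat.not_le.2 hk)]
      have ht : ((k : ℤ)).toNat = k := Int.toNat_natCast k
      rw [ht, gPerm]
      congr 2
      exact card_iff_congr
        (fun σ : Equiv.Perm (Fin (k + d - 1)) =>
          conCount_zero_iff d k hd1 (permWord v) (permWord σ))
  set Pr : ℕ → ℝ := fun j => (Nat.card {σ : Equiv.Perm (Fin (n + d - 1)) //
      (∀ i, i < n - 1 - j * (d - 1) → ¬ consecOcc d (permWord v) (permWord σ) i) ∧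
      (∀ t, t ≤ j → consecOcc d (permWord v) (permWord σ)
        (n - 1 - j * (d - 1) + t * (d - 1)))} : ℝ) / (n + d - 1).factorial with hPr
  have hQ0 : a ((n : ℤ) - 1) = Pr 0 + a (n : ℤ) := by
    have hc1 : ((n - 1 : ℕ) : ℤ) = (n : ℤ) - 1 := by omega
    rw [← hc1, haK (n - 1), haK n]
    have hsplit := perm_split_real (n - 1 + d - 1) 1 (n + d - 1) (by omega)
      (fun τ => ∀ i, i < n - 1 → ¬ consecOcc d (permWord v) (permWord τ) i)
      (fun _ => True)
      (fun σ => ∀ i, i < n - 1 → ¬ consecOcc d (permWord v) (permWord σ) i)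
      (by
        intro σ τ ρ hb1 hb2
        simp only [and_true]
        exact forall_congr' fun i => imp_congr_right fun hi =>
          not_congr (occ_transfer_left σ τ hb1 i (by omega)))
    rw [card_true_perm, Nat.factorial_one] at hsplit
    beta_reduce at hsplit
    simp only [Nat.cast_one, div_one, mul_one] at hsplit
    have hpart := card_partition (α := Equiv.Perm (Fin (n + d - 1)))
      (fun σ => ∀ i, i < n - 1 → ¬ consecOcc d (permWord v) (permWord σ) i)
      (fun σ => consecOcc d (permWord v) (permWord σ) (n - 1))
    have hiff1 : Nat.card {σ : Equiv.Perm (Fin (n + d - 1)) //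
        (∀ i, i < n - 1 → ¬ consecOcc d (permWord v) (permWord σ) i) ∧
          consecOcc d (permWord v) (permWord σ) (n - 1)} =
        Nat.card {σ : Equiv.Perm (Fin (n + d - 1)) //
        (∀ i, i < n - 1 - 0 * (d - 1) → ¬ consecOcc d (permWord v) (permWord σ) i) ∧
        (∀ t, t ≤ 0 → consecOcc d (permWord v) (permWord σ)
          (n - 1 - 0 * (d - 1) + t * (d - 1)))} := by
      apply card_iff_congr
      intro σ
      constructor
      · rintro ⟨h1, h2⟩
        refine ⟨fun i hi => h1 i (by omega), fun t ht => ?_⟩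
        have h3 : t = 0 := by omega
        subst h3
        have h4 : n - 1 - 0 * (d - 1) + 0 * (d - 1) = n - 1 := by omega
        rwa [h4]
      · rintro ⟨h1, h2⟩
        refine ⟨fun i hi => h1 i (by omega), ?_⟩
        have h4 : n - 1 - 0 * (d - 1) + 0 * (d - 1) = n - 1 := by omega
        have := h2 0 le_rfl
        rwa [h4] at this
    have hiff2 : Nat.card {σ : Equiv.Perm (Fin (n + d - 1)) //
        (∀ i, i < n - 1 → ¬ consecOcc d (permWord v) (permWord σ) i) ∧
          ¬ consecOcc d (permWord v) (permWord σ) (n - 1)} =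
        Nat.card {σ : Equiv.Perm (Fin (n + d - 1)) //
          ∀ i, i < n → ¬ consecOcc d (permWord v) (permWord σ) i} := by
      apply card_iff_congr
      intro σ
      constructor
      · rintro ⟨h1, h2⟩ i hi
        rcases Nat.lt_or_ge i (n - 1) with h | h
        · exact h1 i h
        · have : i = n - 1 := by omega
          subst this
          exact h2
      · intro h1
        exact ⟨fun i hi => h1 i (by omega), h1 (n - 1) (by omega)⟩
    rw [hiff1, hiff2] at hpart
    have hPr0 : Pr 0 = (Nat.card {σ : Equiv.Perm (Fin (n + d - 1)) //
        (∀ i, i < n - 1 - 0 * (d - 1) → ¬ consecOcc d (permWord v) (permWord σ) i) ∧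
        (∀ t, t ≤ 0 → consecOcc d (permWord v) (permWord σ)
          (n - 1 - 0 * (d - 1) + t * (d - 1)))} : ℝ) / (n + d - 1).factorial := by
      rw [hPr]
    have hcast : (Nat.card {σ : Equiv.Perm (Fin (n + d - 1)) //
        ∀ i, i < n - 1 → ¬ consecOcc d (permWord v) (permWord σ) i} : ℝ) =
        (Nat.card {σ : Equiv.Perm (Fin (n + d - 1)) //
        (∀ i, i < n - 1 - 0 * (d - 1) → ¬ consecOcc d (permWord v) (permWord σ) i) ∧
        (∀ t, t ≤ 0 → consecOcc d (permWord v) (permWord σ)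
          (n - 1 - 0 * (d - 1) + t * (d - 1)))} : ℝ) +
        (Nat.card {σ : Equiv.Perm (Fin (n + d - 1)) //
          ∀ i, i < n → ¬ consecOcc d (permWord v) (permWord σ) i} : ℝ) := by
      exact_mod_cast congrArg (fun t : ℕ => (t : ℝ)) hpart
    rw [← hsplit, hPr0, hcast, add_div]
  have hstep : ∀ j : ℕ, j + 1 ≤ m →
      L j * a ((n : ℤ) - j * d + j - d) = Pr j + Pr (j + 1) := by
    intro j hj
    have hj1 : (j + 1) * (d - 1) ≤ n - 1 := hdm (j + 1) hj
    have hj0 : j * (d - 1) ≤ n - 1 := hdm j (by omega)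
    have he1 : (j + 1) * (d - 1) = j * (d - 1) + (d - 1) := by ring
    have hm1 := hmul j
    have hm2 := hmul (j + 1)
    have hidx : ((n - 1 - (j + 1) * (d - 1) : ℕ) : ℤ) = (n : ℤ) - j * d + j - d := by
      have hc : (((j + 1) * (d - 1) : ℕ) : ℤ) = ((j : ℤ) + 1) * ((d : ℤ) - 1) := by
        rw [Nat.cast_mul, Nat.cast_add, Nat.cast_one, Nat.cast_sub (show 1 ≤ d by omega),
          Nat.cast_one]
      rw [Nat.cast_sub hj1, Nat.cast_sub hn1, hc]
      push_cast
      ring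
    have hsplit := perm_split_real (n - 1 - (j + 1) * (d - 1) + d - 1) ((j + 1) * d - j)
      (n + d - 1) (by omega)
      (fun τ => ∀ i, i < n - 1 - (j + 1) * (d - 1) → ¬ consecOcc d (permWord v) (permWord τ) i)
      (fun ρ => ∀ s, s ≤ j → consecOcc d (permWord v) (permWord ρ) (s * (d - 1)))
      (fun σ => (∀ i, i < n - 1 - (j + 1) * (d - 1) →
          ¬ consecOcc d (permWord v) (permWord σ) i)
        ∧ (∀ t, t ≤ j → consecOcc d (permWord v) (permWord σ)
            (n - 1 - j * (d - 1) + t * (d - 1))))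
      (by
        intro σ τ ρ hb1 hb2
        apply and_congr
        · exact forall_congr' fun i => imp_congr_right fun hi =>
            not_congr (occ_transfer_left σ τ hb1 i (by omega))
        · refine forall_congr' fun t => imp_congr_right fun ht => ?_
          have hpos : n - 1 - j * (d - 1) + t * (d - 1)
              = (n - 1 - (j + 1) * (d - 1) + d - 1) + t * (d - 1) := by omega
          rw [hpos]
          apply occ_transfer_right σ ρ hb2
          have htmul : t * (d - 1) ≤ j * (d - 1) := Nat.mul_le_mul_right _ ht
          omega)
    beta_reduce at hsplit
    have hpart := card_partition (α := Equiv.Perm (Fin (n + d - 1)))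
      (fun σ => (∀ i, i < n - 1 - (j + 1) * (d - 1) →
          ¬ consecOcc d (permWord v) (permWord σ) i)
        ∧ (∀ t, t ≤ j → consecOcc d (permWord v) (permWord σ)
            (n - 1 - j * (d - 1) + t * (d - 1))))
      (fun σ => consecOcc d (permWord v) (permWord σ) (n - 1 - (j + 1) * (d - 1)))
    have hiffA : Nat.card {σ : Equiv.Perm (Fin (n + d - 1)) //
        ((∀ i, i < n - 1 - (j + 1) * (d - 1) →
          ¬ consecOcc d (permWord v) (permWord σ) i)
        ∧ (∀ t, t ≤ j → consecOcc d (permWord v) (permWord σ)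
            (n - 1 - j * (d - 1) + t * (d - 1))))
        ∧ consecOcc d (permWord v) (permWord σ) (n - 1 - (j + 1) * (d - 1))} =
        Nat.card {σ : Equiv.Perm (Fin (n + d - 1)) //
        (∀ i, i < n - 1 - (j + 1) * (d - 1) → ¬ consecOcc d (permWord v) (permWord σ) i)
        ∧ (∀ t, t ≤ j + 1 → consecOcc d (permWord v) (permWord σ)
            (n - 1 - (j + 1) * (d - 1) + t * (d - 1)))} := by
      apply card_iff_congr
      intro σ
      constructor
      · rintro ⟨⟨h1, h2⟩, hq⟩
        refine ⟨h1, ?_⟩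
        intro t ht
        rcases t with _ | t'
        · have hz : n - 1 - (j + 1) * (d - 1) + 0 * (d - 1) = n - 1 - (j + 1) * (d - 1) := by
            omega
          rwa [hz]
        · have he2 : (t' + 1) * (d - 1) = t' * (d - 1) + (d - 1) := by ring
          have ht' : t' * (d - 1) ≤ j * (d - 1) := Nat.mul_le_mul_right _ (by omega)
          have hz : n - 1 - (j + 1) * (d - 1) + (t' + 1) * (d - 1)
              = n - 1 - j * (d - 1) + t' * (d - 1) := by omega
          rw [hz]
          exact h2 t' (by omega)
      · rintro ⟨h1, h2⟩
        refine ⟨⟨h1, ?_⟩, ?_⟩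
        · intro t ht
          have he2 : (t + 1) * (d - 1) = t * (d - 1) + (d - 1) := by ring
          have ht' : t * (d - 1) ≤ j * (d - 1) := Nat.mul_le_mul_right _ ht
          have hz : n - 1 - (j + 1) * (d - 1) + (t + 1) * (d - 1)
              = n - 1 - j * (d - 1) + t * (d - 1) := by omega
          have := h2 (t + 1) (by omega)
          rwa [hz] at this
        · have := h2 0 (by omega)
          have hz : n - 1 - (j + 1) * (d - 1) + 0 * (d - 1) = n - 1 - (j + 1) * (d - 1) := by
            omega
          rwa [hz] at this
    have hiffB : Nat.card {σ : Equiv.Perm (Fin (n + d - 1)) //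
        ((∀ i, i < n - 1 - (j + 1) * (d - 1) →
          ¬ consecOcc d (permWord v) (permWord σ) i)
        ∧ (∀ t, t ≤ j → consecOcc d (permWord v) (permWord σ)
            (n - 1 - j * (d - 1) + t * (d - 1))))
        ∧ ¬ consecOcc d (permWord v) (permWord σ) (n - 1 - (j + 1) * (d - 1))} =
        Nat.card {σ : Equiv.Perm (Fin (n + d - 1)) //
        (∀ i, i < n - 1 - j * (d - 1) → ¬ consecOcc d (permWord v) (permWord σ) i)
        ∧ (∀ t, t ≤ j → consecOcc d (permWord v) (permWord σ)
            (n - 1 - j * (d - 1) + t * (d - 1)))} := by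
      apply card_iff_congr
      intro σ
      constructor
      · rintro ⟨⟨h1, h2⟩, hq⟩
        refine ⟨?_, h2⟩
        intro i hi hocc
        have hocc0 : consecOcc d (permWord v) (permWord σ) (n - 1 - j * (d - 1)) := by
          have := h2 0 (by omega)
          have hz : n - 1 - j * (d - 1) + 0 * (d - 1) = n - 1 - j * (d - 1) := by omega
          rwa [hz] at this
        rcases Nat.lt_or_ge i (n - 1 - (j + 1) * (d - 1)) with h | h
        · exact h1 i h hocc
        · rcases Nat.eq_or_lt_of_le h with h' | h'
          · rw [h'] at hq
            exact hq hocc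
          · exact no_close_occ hno (show i < n - 1 - j * (d - 1) from hi) (by omega)
              hocc hocc0
      · rintro ⟨h1, h2⟩
        refine ⟨⟨fun i hi => h1 i (by omega), h2⟩, h1 _ (by omega)⟩
    rw [hiffA, hiffB] at hpart
    rw [hL j, ← hidx, haK (n - 1 - (j + 1) * (d - 1))]
    rw [hPr]
    rw [mul_comm]
    rw [← hsplit]
    have hcomm : Nat.card {σ : Equiv.Perm (Fin (n + d - 1)) //
        (∀ i, i < n - 1 - (j + 1) * (d - 1) → ¬ consecOcc d (permWord v) (permWord σ) i)
        ∧ (∀ t, t ≤ j → consecOcc d (permWord v) (permWord σ)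
            (n - 1 - j * (d - 1) + t * (d - 1)))} =
        Nat.card {σ : Equiv.Perm (Fin (n + d - 1)) //
        (∀ i, i < n - 1 - j * (d - 1) → ¬ consecOcc d (permWord v) (permWord σ) i)
        ∧ (∀ t, t ≤ j → consecOcc d (permWord v) (permWord σ)
            (n - 1 - j * (d - 1) + t * (d - 1)))} +
        Nat.card {σ : Equiv.Perm (Fin (n + d - 1)) //
        (∀ i, i < n - 1 - (j + 1) * (d - 1) → ¬ consecOcc d (permWord v) (permWord σ) i)
        ∧ (∀ t, t ≤ j + 1 → consecOcc d (permWord v) (permWord σ)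
            (n - 1 - (j + 1) * (d - 1) + t * (d - 1)))} := by omega
    rw [hcomm]
    push_cast
    rw [add_div]
  have hbase : Pr m = L m := by
    have hm0 : m * (d - 1) ≤ n - 1 := hdm m le_rfl
    have hma := hmul m
    have hmb := hmul (m + 1)
    have hme : (m + 1) * (d - 1) = m * (d - 1) + (d - 1) := by ring
    have hsmall : n - 1 - m * (d - 1) < d - 1 := by omega
    have hsub : n - 1 - m * (d - 1) + m * (d - 1) = n - 1 := Nat.sub_add_cancel hm0
    have hiff : Nat.card {σ : Equiv.Perm (Fin (n + d - 1)) //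
        (∀ i, i < n - 1 - m * (d - 1) → ¬ consecOcc d (permWord v) (permWord σ) i)
        ∧ (∀ t, t ≤ m → consecOcc d (permWord v) (permWord σ)
            (n - 1 - m * (d - 1) + t * (d - 1)))} =
        Nat.card {σ : Equiv.Perm (Fin (n + d - 1)) //
        ∀ t, t ≤ m → consecOcc d (permWord v) (permWord σ)
            (n - 1 - m * (d - 1) + t * (d - 1))} := by
      apply card_iff_congr
      intro σ
      constructor
      · rintro ⟨h1, h2⟩
        exact h2
      · intro h2
        refine ⟨?_, h2⟩
        intro i hi hocc
        have hocc0 : consecOcc d (permWord v) (permWord σ) (n - 1 - m * (d - 1)) := by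
          have := h2 0 (by omega)
          have hz : n - 1 - m * (d - 1) + 0 * (d - 1) = n - 1 - m * (d - 1) := by omega
          rwa [hz] at this
        exact no_close_occ hno hi (by omega) hocc hocc0
    have hsplit := perm_split_real (n - 1 - m * (d - 1)) ((m + 1) * d - m)
      (n + d - 1) (by omega)
      (fun _ => True)
      (fun ρ => ∀ s, s ≤ m → consecOcc d (permWord v) (permWord ρ) (s * (d - 1)))
      (fun σ => ∀ t, t ≤ m → consecOcc d (permWord v) (permWord σ)
          (n - 1 - m * (d - 1) + t * (d - 1)))
      (by
        intro σ τ ρ hb1 hb2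
        simp only [true_and]
        refine forall_congr' fun t => imp_congr_right fun ht => ?_
        apply occ_transfer_right σ ρ hb2
        have htm : t * (d - 1) ≤ m * (d - 1) := Nat.mul_le_mul_right _ ht
        omega)
    beta_reduce at hsplit
    rw [card_true_perm] at hsplit
    rw [div_self (show ((n - 1 - m * (d - 1)).factorial : ℝ) ≠ 0 by positivity),
      one_mul] at hsplit
    rw [hPr]
    beta_reduce
    rw [hiff, hL m]
    exact hsplit
  have tele : ∀ r j, j + r = m →
      Pr j = ∑ t ∈ Finset.Icc j m, (-1 : ℝ) ^ (t - j) * L t * a ((n : ℤ) - t * d + t - d) := by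
    intro r
    induction r with
    | zero =>
      intro j hj
      have hjm : j = m := by omega
      subst hjm
      rw [Finset.Icc_self, Finset.sum_singleton, Nat.sub_self, pow_zero, one_mul]
      have hneg : (n : ℤ) - j * d + j - d ≤ 0 := by
        have h0 : ((n - 1 : ℕ) : ℤ) < ((j * (d - 1) + (d - 1) : ℕ) : ℤ) := Nat.cast_lt.2 hmlt
        rw [Nat.cast_sub hn1, Nat.cast_add, Nat.cast_mul,
          Nat.cast_sub (show 1 ≤ d by omega), Nat.cast_one] at h0
        push_cast at h0 ⊢
        nlinarith [h0]
      rw [ha ((n : ℤ) - j * d + j - d), if_pos hneg, mul_one]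
      exact hbase
    | succ r ih =>
      intro j hj
      have hjm : j + 1 ≤ m := by omega
      have hins : Finset.Icc j m = insert j (Finset.Icc (j + 1) m) := by
        ext x
        simp only [Finset.mem_Icc, Finset.mem_insert]
        omega
      rw [hins, Finset.sum_insert (by simp), Nat.sub_self, pow_zero, one_mul]
      have hsum : ∑ t ∈ Finset.Icc (j + 1) m,
          (-1 : ℝ) ^ (t - j) * L t * a ((n : ℤ) - t * d + t - d)
          = -∑ t ∈ Finset.Icc (j + 1) m,
            (-1 : ℝ) ^ (t - (j + 1)) * L t * a ((n : ℤ) - t * d + t - d) := by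
        rw [← Finset.sum_neg_distrib]
        apply Finset.sum_congr rfl
        intro t ht
        simp only [Finset.mem_Icc] at ht
        rw [show t - j = (t - (j + 1)) + 1 from by omega, pow_succ]
        ring
      rw [hsum, ← ih (j + 1) (by omega)]
      have hst := hstep j hjm
      linarith
  have htop := tele m 0 (by omega)
  have hins0 : Finset.Icc 0 m = insert 0 (Finset.Icc 1 m) := by
    ext x
    simp only [Finset.mem_Icc, Finset.mem_insert]
    omega
  rw [hins0, Finset.sum_insert (by simp)] at htop
  have hsum0 : ∑ t ∈ Finset.Icc 1 m, (-1 : ℝ) ^ (t - 0) * L t * a ((n : ℤ) - t * d + t - d)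
      = ∑ t ∈ Finset.Icc 1 m, (-1 : ℝ) ^ t * L t * a ((n : ℤ) - t * d + t - d) := by
    apply Finset.sum_congr rfl
    intro t ht
    rw [Nat.sub_zero]
  rw [hsum0] at htop
  have hL0 : L 0 = 1 / (d.factorial : ℝ) := by
    rw [hL 0, chain_card_zero d hd1 v ((0 + 1) * d - 0) (by omega),
      show (0 + 1) * d - 0 = d from by omega]
    norm_num
  have hterm0 : (-1 : ℝ) ^ (0 - 0 : ℕ) * L 0 * a ((n : ℤ) - (0 : ℕ) * d + (0 : ℕ) - d)
      = (1 / (d.factorial : ℝ)) * a ((n : ℤ) - d) := by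
    norm_num [hL0]
  rw [hterm0] at htop
  linarith
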